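/- A group G admits a nonempty strongly aperiodic subshift of finite type (over some finite alphabet) if and only if there exist a finitely generated subgroup H ≤ G, a finite alphabet A, and a nonempty SFT Y ⊆ A^H such that for every g ∈ G with g ≠ 1 one has Cl(g) ∩ R_G(Free(Y)) ≠ ∅, i.e. there exist t ∈ G and an integer n > 0 with (t g t⁻¹)^n ∈ Free(Y). -/

import Mathlib

variable {G A : Type*}

/-- The left shift action of a group on configurations: `(shift g x) h = x (g⁻¹ * h)`. -/
def shift [Group G] (g : G) (x : G → A) : G → A := fun h => x (g⁻¹ * h)

/-- The subshift of finite type on `G` defined by the shape `F` and the pattern set `L`: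
all configurations `x` such that for every `g`, the restriction of `g • x` to `F` lies in `L`. -/
def SFT [Group G] (F : Set G) (L : Set (F → A)) : Set (G → A) :=
  {x | ∀ g : G, (fun f : F => shift g x f) ∈ L}

/-- The subshift of finite type on the subgroup `H` defined by the shape `F ⊆ H`
and the pattern set `L`. -/
def SFTon [Group G] (H : Subgroup G) (F : Set G) (hF : F ⊆ (H : Set G)) (L : Set (F → A)) :
    Set (↥H → A) :=
  {y | ∀ h : ↥H, (fun f : F => y (h⁻¹ * ⟨(f : G), hF f.2⟩)) ∈ L}

/-- The free part of a subshift: elements acting freely on every configuration. -/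
def freePart [Group G] (X : Set (G → A)) : Set G := {g | ∀ x ∈ X, shift g x ≠ x}

lemma shift_mul [Group G] (g₁ g₂ : G) (x : G → A) :
    shift (g₁ * g₂) x = shift g₁ (shift g₂ x) := by
  funext h; simp [shift, mul_assoc]
lemma shift_one [Group G] (x : G → A) : shift (1 : G) x = x := by funext h; simp [shift]
lemma shift_pow [Group G] {g : G} {x : G → A} (hx : shift g x = x) (n : ℕ) :
    shift (g ^ n) x = x := by
  induction n with
  | zero => simpa using shift_one x
  | succ n ih => rw [pow_succ, shift_mul, hx, ih]
lemma shift_zpow [Group G] {g : G} {x : G → A} (hx : shift g x = x) (m : ℤ) :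
    shift (g ^ m) x = x := by
  have hinv : shift g⁻¹ x = x := by
    conv_lhs => rw [← hx]
    rw [← shift_mul]; simpa using shift_one x
  induction m using Int.rec with
  | ofNat n => simpa using shift_pow hx n
  | negSucc n => rw [zpow_negSucc, ← inv_pow]; exact shift_pow hinv (n + 1)

def Per [Group G] (H : Subgroup G) (g : G) (r₀ : G) (y : ↥H → A) : Prop :=
  ∀ (m : ℤ) (hm : r₀⁻¹ * g ^ m * r₀ ∈ H) (z : ↥H), y (⟨r₀⁻¹ * g ^ m * r₀, hm⟩ * z) = y z

lemma exists_per [Group G] (H : Subgroup G) (F : Set G) (hF : F ⊆ (H : Set G))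
    (L : Set (F → A)) (g : G) (hne : (SFTon H F hF L).Nonempty)
    (hfree : ∀ t : G, ∀ n : ℕ, 0 < n → ∀ k : ↥H, (k : G) = (t * g * t⁻¹) ^ n →
      ∃ y ∈ SFTon H F hF L, shift k y = y) (r₀ : G) :
    ∃ y ∈ SFTon H F hF L, Per H g r₀ y := by
  classical
  by_cases hex : ∃ n : ℕ, 0 < n ∧ r₀⁻¹ * g ^ n * r₀ ∈ H
  · set N := Nat.find hex with hN
    obtain ⟨hNpos, hNmem⟩ := Nat.find_spec hex
    set k : ↥H := ⟨r₀⁻¹ * g ^ N * r₀, hNmem⟩ with hkdef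
    obtain ⟨y, hyY, hyk⟩ := hfree r₀⁻¹ N hNpos k (by
      rw [hkdef]
      show r₀⁻¹ * g ^ N * r₀ = (r₀⁻¹ * g * r₀⁻¹⁻¹) ^ N
      rw [conj_pow, inv_inv])
    refine ⟨y, hyY, ?_⟩
    intro m hm z
    have hNne : ((N : ℤ)) ≠ 0 := by exact_mod_cast hNpos.ne'
    have hmul : ∀ q : ℤ, r₀⁻¹ * g ^ ((N : ℤ) * q) * r₀ ∈ H := by
      intro q
      have h1 : r₀⁻¹ * g ^ ((N : ℤ) * q) * r₀ = ((k ^ q : ↥H) : G) := by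
        rw [SubgroupClass.coe_zpow, hkdef]
        show r₀⁻¹ * g ^ ((N : ℤ) * q) * r₀ = (r₀⁻¹ * g ^ N * r₀) ^ q
        conv_rhs => rw [show r₀⁻¹ * g ^ N * r₀ = r₀⁻¹ * g ^ N * r₀⁻¹⁻¹ by rw [inv_inv]]
        rw [conj_zpow, inv_inv, ← zpow_natCast g N, ← zpow_mul]
      rw [h1]; exact (k ^ q).2
    have hd0 : m % (N : ℤ) = 0 := by
      by_contra hdne
      have h0 : 0 ≤ m % (N : ℤ) := Int.emod_nonneg m hNne
      have h1 : m % (N : ℤ) < N := Int.emod_lt_of_pos m (by exact_mod_cast hNpos)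
      have hdm : r₀⁻¹ * g ^ (m % (N : ℤ)) * r₀ ∈ H := by
        have hmem := mul_mem hm (inv_mem (hmul (m / N)))
        have heq : r₀⁻¹ * g ^ m * r₀ * (r₀⁻¹ * g ^ ((N : ℤ) * (m / N)) * r₀)⁻¹
            = r₀⁻¹ * g ^ (m % (N : ℤ)) * r₀ := by
          rw [Int.emod_def]; group
        rwa [heq] at hmem
      have hlt : (m % (N : ℤ)).toNat < N := by omega
      refine Nat.find_min hex hlt ⟨by omega, ?_⟩
      have : ((m % (N : ℤ)).toNat : ℤ) = m % (N : ℤ) := Int.toNat_of_nonneg h0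
      rw [← zpow_natCast g, this]; exact hdm
    obtain ⟨q, hq⟩ : ((N : ℤ)) ∣ m := Int.dvd_of_emod_eq_zero hd0
    have hk : (⟨r₀⁻¹ * g ^ m * r₀, hm⟩ : ↥H) = k ^ q := by
      apply Subtype.ext
      rw [SubgroupClass.coe_zpow, hkdef]
      show r₀⁻¹ * g ^ m * r₀ = (r₀⁻¹ * g ^ N * r₀) ^ q
      conv_rhs => rw [show r₀⁻¹ * g ^ N * r₀ = r₀⁻¹ * g ^ N * r₀⁻¹⁻¹ by rw [inv_inv]]
      rw [conj_zpow, inv_inv, ← zpow_natCast g N, ← zpow_mul, hq]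
    have := congrFun (shift_zpow hyk (-q)) z
    simp only [shift, zpow_neg, inv_inv] at this
    rw [hk]
    exact this
  · obtain ⟨y, hy⟩ := hne
    refine ⟨y, hy, ?_⟩
    intro m hm z
    have hm0 : m = 0 := by
      by_contra hne0
      rcases lt_or_gt_of_ne hne0 with hlt | hgt
      · refine hex ⟨(-m).toNat, by omega, ?_⟩
        have h1 : (((-m).toNat : ℤ)) = -m := Int.toNat_of_nonneg (by omega)
        rw [← zpow_natCast g, h1]
        have : r₀⁻¹ * g ^ (-m) * r₀ = (r₀⁻¹ * g ^ m * r₀)⁻¹ := by group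
        rw [this]; exact inv_mem hm
      · refine hex ⟨m.toNat, by omega, ?_⟩
        have h1 : ((m.toNat : ℤ)) = m := Int.toNat_of_nonneg (by omega)
        rw [← zpow_natCast g, h1]; exact hm
    subst hm0
    have : (⟨r₀⁻¹ * g ^ (0 : ℤ) * r₀, hm⟩ : ↥H) = 1 := by
      apply Subtype.ext; simp
    rw [this, one_mul]

lemma exists_rep_fun {α : Type*} (S : Setoid α) :
    ∃ rep : α → α, (∀ s, S.r (rep s) s) ∧ ∀ s s', S.r s s' → rep s = rep s' := by
  refine ⟨fun s => (Quotient.mk S s).out, fun s => ?_, fun s s' h => ?_⟩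
  · exact Quotient.exact (Quotient.out_eq (Quotient.mk S s))
  · exact congrArg Quotient.out (Quotient.sound h)

lemma construct [Group G] (H : Subgroup G) (F : Set G) (hF : F ⊆ (H : Set G))
    (L : Set (F → A)) (g : G) (hne : (SFTon H F hF L).Nonempty)
    (hfree : ∀ t : G, ∀ n : ℕ, 0 < n → ∀ k : ↥H, (k : G) = (t * g * t⁻¹) ^ n →
      ∃ y ∈ SFTon H F hF L, shift k y = y) :
    ∃ x ∈ SFT F L, shift g x = x := by
  classical
  choose ych hychY hychP using exists_per H F hF L g hne hfree
  have hsymm : ∀ s s' : G, (∃ m : ℤ, (g ^ m * s)⁻¹ * s' ∈ H) →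
      (∃ m : ℤ, (g ^ m * s')⁻¹ * s ∈ H) := by
    rintro s s' ⟨m, hm⟩
    refine ⟨-m, ?_⟩
    have := inv_mem hm
    rwa [show ((g ^ m * s)⁻¹ * s')⁻¹ = (g ^ (-m) * s')⁻¹ * s from by group] at this
  have htrans : ∀ s s' s'' : G, (∃ m : ℤ, (g ^ m * s)⁻¹ * s' ∈ H) →
      (∃ m : ℤ, (g ^ m * s')⁻¹ * s'' ∈ H) → (∃ m : ℤ, (g ^ m * s)⁻¹ * s'' ∈ H) := by
    rintro s s' s'' ⟨m, hm⟩ ⟨m', hm'⟩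
    refine ⟨m + m', ?_⟩
    have := mul_mem hm hm'
    rwa [show (g ^ m * s)⁻¹ * s' * ((g ^ m' * s')⁻¹ * s'') = (g ^ (m + m') * s)⁻¹ * s''
      from by group] at this
  obtain ⟨rep, hrep1, hrep2⟩ := exists_rep_fun
    ⟨fun s s' => ∃ m : ℤ, (g ^ m * s)⁻¹ * s' ∈ H,
      ⟨fun s => ⟨0, by simpa using H.one_mem⟩, fun {s s'} h => hsymm s s' h,
        fun {a b c} h h' => htrans a b c h h'⟩⟩
  choose mch hmch using hrep1
  have W : ∀ (r₀ s : G) (m m' : ℤ) (hm : (g ^ m * r₀)⁻¹ * s ∈ H)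
      (hm' : (g ^ m' * r₀)⁻¹ * s ∈ H),
      ych r₀ ⟨(g ^ m * r₀)⁻¹ * s, hm⟩ = ych r₀ ⟨(g ^ m' * r₀)⁻¹ * s, hm'⟩ := by
    intro r₀ s m m' hm hm'
    have hd : r₀⁻¹ * g ^ (m - m') * r₀ ∈ H := by
      have := mul_mem hm' (inv_mem hm)
      rwa [show (g ^ m' * r₀)⁻¹ * s * ((g ^ m * r₀)⁻¹ * s)⁻¹ = r₀⁻¹ * g ^ (m - m') * r₀
        from by group] at this
    have heq : (⟨r₀⁻¹ * g ^ (m - m') * r₀, hd⟩ : ↥H) * ⟨(g ^ m * r₀)⁻¹ * s, hm⟩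
        = ⟨(g ^ m' * r₀)⁻¹ * s, hm'⟩ := by
      apply Subtype.ext
      show (r₀⁻¹ * g ^ (m - m') * r₀) * ((g ^ m * r₀)⁻¹ * s) = (g ^ m' * r₀)⁻¹ * s
      group
    rw [← heq]
    exact (hychP r₀ (m - m') hd _).symm
  have hx_eq : ∀ (s r₁ : G) (m₁ : ℤ) (h1 : (g ^ m₁ * r₁)⁻¹ * s ∈ H), rep s = r₁ →
      ych (rep s) ⟨(g ^ mch s * rep s)⁻¹ * s, hmch s⟩ = ych r₁ ⟨(g ^ m₁ * r₁)⁻¹ * s, h1⟩ := by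
    rintro s r₁ m₁ h1 rfl
    exact W (rep s) s (mch s) m₁ (hmch s) h1
  refine ⟨fun s => ych (rep s) ⟨(g ^ mch s * rep s)⁻¹ * s, hmch s⟩, ?_, ?_⟩
  · intro g'
    set r₀ := rep g'⁻¹ with hr₀
    have ha : (g ^ mch g'⁻¹ * r₀)⁻¹ * g'⁻¹ ∈ H := hmch g'⁻¹
    have key : (fun f : F => shift g' (fun s =>
          ych (rep s) ⟨(g ^ mch s * rep s)⁻¹ * s, hmch s⟩) f)
        = (fun f : F => ych r₀ ((⟨(g ^ mch g'⁻¹ * r₀)⁻¹ * g'⁻¹, ha⟩ : ↥H)⁻¹⁻¹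
            * ⟨(f : G), hF f.2⟩)) := by
      funext f
      show ych (rep (g'⁻¹ * f)) ⟨(g ^ mch (g'⁻¹ * f) * rep (g'⁻¹ * f))⁻¹ * (g'⁻¹ * f),
        hmch (g'⁻¹ * f)⟩ = _
      have hrepf : rep (g'⁻¹ * (f : G)) = r₀ := by
        refine (hrep2 g'⁻¹ (g'⁻¹ * f) ⟨0, ?_⟩).symm
        simpa using hF f.2
      have h1 : (g ^ mch g'⁻¹ * r₀)⁻¹ * (g'⁻¹ * f) ∈ H := by
        rw [← mul_assoc]
        exact mul_mem ha (hF f.2)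
      rw [hx_eq (g'⁻¹ * f) r₀ (mch g'⁻¹) h1 hrepf]
      refine congrArg (ych r₀) (Subtype.ext ?_)
      show (g ^ mch g'⁻¹ * r₀)⁻¹ * (g'⁻¹ * f) = (((g ^ mch g'⁻¹ * r₀)⁻¹ * g'⁻¹)⁻¹)⁻¹ * f
      group
    rw [key]
    exact hychY r₀ (⟨(g ^ mch g'⁻¹ * r₀)⁻¹ * g'⁻¹, ha⟩ : ↥H)⁻¹
  · funext s
    show ych (rep (g⁻¹ * s)) ⟨(g ^ mch (g⁻¹ * s) * rep (g⁻¹ * s))⁻¹ * (g⁻¹ * s),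
      hmch (g⁻¹ * s)⟩ = ych (rep s) ⟨(g ^ mch s * rep s)⁻¹ * s, hmch s⟩
    have hrepg : rep (g⁻¹ * s) = rep s := by
      refine (hrep2 s (g⁻¹ * s) ⟨-1, ?_⟩).symm
      rw [show (g ^ (-1 : ℤ) * s)⁻¹ * (g⁻¹ * s) = 1 from by group]
      exact H.one_mem
    have h1 : (g ^ (mch s - 1) * rep s)⁻¹ * (g⁻¹ * s) ∈ H := by
      have := hmch s
      rwa [show (g ^ mch s * rep s)⁻¹ * s = (g ^ (mch s - 1) * rep s)⁻¹ * (g⁻¹ * s)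
        from by group] at this
    rw [hx_eq (g⁻¹ * s) (rep s) (mch s - 1) h1 hrepg]
    exact congrArg (ych (rep s)) (Subtype.ext (by group))

lemma restrict_mem [Group G] (H : Subgroup G) (F : Set G) (hF : F ⊆ (H : Set G))
    (L : Set (F → A)) (x : G → A) (hx : x ∈ SFT F L) :
    (fun h : ↥H => x h) ∈ SFTon H F hF L := by
  intro h
  simpa [shift] using hx (h : G)

lemma shift_mem_SFT [Group G] {F : Set G} {L : Set (F → A)} {x : G → A}
    (hx : x ∈ SFT F L) (t : G) : shift t x ∈ SFT F L := by
  intro g'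
  have h : shift g' (shift t x) = shift (g' * t) x := (shift_mul g' t x).symm
  rw [h]
  exact hx (g' * t)


/-- A group `G` admits a nonempty strongly aperiodic SFT (over some finite
alphabet) iff there is a finitely generated subgroup `H ≤ G` and a nonempty SFT `Y` on `H`
(over some finite alphabet) such that every nontrivial `g ∈ G` has a conjugate with a positive
power lying in the free part of `Y`. -/
theorem exists_SA_SFT_iff
    {G : Type*} [Group G] :
    (∃ (A : Type) (_ : Finite A) (F : Set G) (_ : F.Finite) (L : Set (F → A)),
        (SFT F L).Nonempty ∧ ∀ x ∈ SFT F L, ∀ g : G, shift g x = x → g = 1) ↔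
    (∃ (H : Subgroup G), H.FG ∧
      ∃ (A : Type) (_ : Finite A) (F : Set G) (_ : F.Finite) (hF : F ⊆ (H : Set G))
        (L : Set (F → A)),
        (SFTon H F hF L).Nonempty ∧
        ∀ g : G, g ≠ 1 → ∃ t : G, ∃ n : ℕ, 0 < n ∧
          ∃ k : ↥H, (k : G) = (t * g * t⁻¹) ^ n ∧ k ∈ freePart (SFTon H F hF L)) := by
  constructor
  · rintro ⟨A, hA, F, hFfin, L, ⟨x₀, hx₀⟩, hSA⟩
    refine ⟨Subgroup.closure F, (Subgroup.fg_iff _).2 ⟨F, rfl, hFfin⟩, A, hA, F, hFfin,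
      Subgroup.subset_closure, L, ⟨_, restrict_mem _ F Subgroup.subset_closure L x₀ hx₀⟩, ?_⟩
    intro g hg
    by_contra hcon
    push_neg at hcon
    have hfree : ∀ t : G, ∀ n : ℕ, 0 < n → ∀ k : ↥(Subgroup.closure F),
        (k : G) = (t * g * t⁻¹) ^ n →
        ∃ y ∈ SFTon (Subgroup.closure F) F Subgroup.subset_closure L, shift k y = y := by
      intro t n hn k hk
      have := hcon t n hn k hk
      simp only [freePart, Set.mem_setOf_eq, not_forall] at this
      obtain ⟨y, hy, hy2⟩ := this
      exact ⟨y, hy, not_not.mp hy2⟩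
    obtain ⟨x, hx, hgx⟩ := construct (Subgroup.closure F) F Subgroup.subset_closure L g
      ⟨_, restrict_mem _ F Subgroup.subset_closure L x₀ hx₀⟩ hfree
    exact hg (hSA x hx g hgx)
  · rintro ⟨H, _, A, hA, F, hFfin, hF, L, hne, hcond⟩
    refine ⟨A, hA, F, hFfin, L, ?_, ?_⟩
    · have hfree1 : ∀ t : G, ∀ n : ℕ, 0 < n → ∀ k : ↥H, (k : G) = (t * 1 * t⁻¹) ^ n →
          ∃ y ∈ SFTon H F hF L, shift k y = y := by
        intro t n hn k hk
        obtain ⟨y, hy⟩ := hne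
        have hk1 : k = 1 := by
          apply Subtype.ext
          simpa using hk
        exact ⟨y, hy, by rw [hk1]; exact shift_one y⟩
      obtain ⟨x, hx, -⟩ := construct H F hF L 1 hne hfree1
      exact ⟨x, hx⟩
    · intro x hx g hgx
      by_contra hg
      obtain ⟨t, n, hn, k, hk, hkfree⟩ := hcond g hg
      have hx' : shift t x ∈ SFT F L := shift_mem_SFT hx t
      have hper : shift ((t * g * t⁻¹) ^ n) (shift t x) = shift t x := by
        apply shift_pow
        rw [← shift_mul, show t * g * t⁻¹ * t = t * g from by group, shift_mul, hgx]
      have hy : (fun h : ↥H => shift t x h) ∈ SFTon H F hF L :=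
        restrict_mem H F hF L _ hx'
      refine hkfree _ hy ?_
      funext h
      show shift t x ((k : G)⁻¹ * h) = shift t x h
      rw [hk]
      exact congrFun hper h
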